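/- Let T be a finite set, let (p_j)_{j∈T} be strictly positive reals, let s > 0, and let r be an integer with 0 ≤ r ≤ |T|. Then Ψ_r := Σ_{U ⊆ T} (−1)^{|U|−r} binom(|U|, r) / (s + p_U)² > 0, where p_U = Σ_{j∈U} p_j and binom(|U|, r) = 0 when |U| < r. -/

import Mathlib

open Finset MeasureTheory Real Set

/-- Value of the basic Laplace-type integral. -/
lemma psi_integral_val {c : ℝ} (hc : 0 < c) :
    ∫ t in Ioi (0:ℝ), t * Real.exp (-(c * t)) = 1 / c ^ 2 := by
  have h := Real.integral_rpow_mul_exp_neg_mul_Ioi (a := 2) (r := c) two_pos hc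
  have h1 : ∀ t ∈ Ioi (0:ℝ), t ^ ((2:ℝ) - 1) * Real.exp (-(c * t))
      = t * Real.exp (-(c * t)) := by
    intro t ht
    rw [show ((2:ℝ) - 1) = 1 by norm_num, Real.rpow_one]
  rw [setIntegral_congr_fun measurableSet_Ioi h1] at h
  rw [h, Real.Gamma_two, mul_one]
  rw [show ((2:ℝ)) = ((2:ℕ):ℝ) by norm_num, Real.rpow_natCast]
  rw [div_pow, one_pow]

/-- Integrability of the basic Laplace-type integrand. -/
lemma psi_integrable {c : ℝ} (hc : 0 < c) :
    IntegrableOn (fun t : ℝ => t * Real.exp (-(c * t))) (Ioi 0) := by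
  have h := integrableOn_rpow_mul_exp_neg_mul_rpow (p := 1) (s := 1) (b := c)
    (by norm_num) one_pos hc
  refine h.congr_fun (fun t ht => ?_) measurableSet_Ioi
  simp only [Real.rpow_one, neg_mul]

/-- The key combinatorial identity: the alternating binomial sum equals a sum of
manifestly positive products. -/
lemma psi_comb {ι : Type*} [DecidableEq ι] (T : Finset ι) (r : ℕ) (y : ι → ℝ) :
    ∑ U ∈ T.powerset, (-1 : ℝ) ^ (U.card - r) * (U.card.choose r : ℝ) * ∏ j ∈ U, y j
      = ∑ V ∈ T.powersetCard r, (∏ j ∈ V, y j) * ∏ j ∈ T \ V, (1 - y j) := by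
  have expand : ∀ V ∈ T.powersetCard r,
      (∏ j ∈ V, y j) * ∏ j ∈ T \ V, (1 - y j)
        = ∑ W ∈ (T \ V).powerset, (-1 : ℝ) ^ W.card * ∏ j ∈ V ∪ W, y j := by
    intro V hV
    rw [mem_powersetCard] at hV
    have h1 : ∀ j, (1 - y j) = (fun j => -y j) j + (fun _ => (1:ℝ)) j := by
      intro j; simp [sub_eq_neg_add, add_comm]
    rw [Finset.prod_congr rfl (fun j _ => h1 j), Finset.prod_add, Finset.mul_sum]
    refine Finset.sum_congr rfl (fun W hW => ?_)
    rw [Finset.mem_powerset] at hW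
    have hdisj : Disjoint V W := (Finset.sdiff_disjoint.mono_left hW).symm
    have h2 : ∀ j ∈ W, -y j = (-1 : ℝ) * y j := by intro j _; ring
    rw [Finset.prod_const, one_pow, mul_one, Finset.prod_congr rfl h2,
      Finset.prod_mul_distrib, Finset.prod_const, Finset.prod_union hdisj]
    ring
  rw [Finset.sum_congr rfl expand]
  have choose_eq : ∀ U ∈ T.powerset,
      (-1 : ℝ) ^ (U.card - r) * (U.card.choose r : ℝ) * ∏ j ∈ U, y j
        = ∑ V ∈ U.powersetCard r, (-1 : ℝ) ^ (U.card - r) * ∏ j ∈ U, y j := by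
    intro U _
    rw [Finset.sum_const, Finset.card_powersetCard, nsmul_eq_mul]
    ring
  rw [Finset.sum_congr rfl choose_eq, Finset.sum_sigma', Finset.sum_sigma']
  refine Finset.sum_nbij' (i := fun UV => ⟨UV.2, UV.1 \ UV.2⟩)
    (j := fun VW => ⟨VW.1 ∪ VW.2, VW.1⟩) ?_ ?_ ?_ ?_ ?_
  · rintro ⟨U, V⟩ h
    simp only [Finset.mem_sigma, Finset.mem_powerset, Finset.mem_powersetCard] at h ⊢
    obtain ⟨hUT, hVU, hVr⟩ := h
    exact ⟨⟨hVU.trans hUT, hVr⟩, Finset.sdiff_subset_sdiff hUT le_rfl⟩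
  · rintro ⟨V, W⟩ h
    simp only [Finset.mem_sigma, Finset.mem_powerset, Finset.mem_powersetCard] at h ⊢
    obtain ⟨⟨hVT, hVr⟩, hW⟩ := h
    refine ⟨Finset.union_subset hVT (hW.trans Finset.sdiff_subset), Finset.subset_union_left, hVr⟩
  · rintro ⟨U, V⟩ h
    simp only [Finset.mem_sigma, Finset.mem_powerset, Finset.mem_powersetCard] at h
    obtain ⟨hUT, hVU, hVr⟩ := h
    simp [Finset.union_sdiff_of_subset hVU]
  · rintro ⟨V, W⟩ h
    simp only [Finset.mem_sigma, Finset.mem_powerset, Finset.mem_powersetCard] at h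
    obtain ⟨⟨hVT, hVr⟩, hW⟩ := h
    have hdisj : Disjoint V W := (Finset.sdiff_disjoint.mono_left hW).symm
    simp [Finset.union_sdiff_cancel_left hdisj]
  · rintro ⟨U, V⟩ h
    simp only [Finset.mem_sigma, Finset.mem_powerset, Finset.mem_powersetCard] at h
    obtain ⟨hUT, hVU, hVr⟩ := h
    have hcard : (U \ V).card = U.card - r := by rw [Finset.card_sdiff_of_subset hVU, hVr]
    simp only [hcard, Finset.union_sdiff_of_subset hVU]

/-- Strict positivity of `Ψ_r`: for a finite set `T` with strictly positive
weights `p_j`, `s > 0` and `0 ≤ r ≤ |T|`,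
`Ψ_r = Σ_{U⊆T} (-1)^{|U|-r} binom(|U|,r) / (s+p_U)² > 0`
(with `binom(|U|,r) = 0` for `|U| < r` and `p_U = Σ_{j∈U} p_j`). -/
theorem Psi_pos {ι : Type*} [DecidableEq ι] (T : Finset ι)
    (p : ι → ℝ) (hp : ∀ j ∈ T, 0 < p j) (s : ℝ) (hs : 0 < s)
    (r : ℕ) (hr : r ≤ T.card) :
    0 < ∑ U ∈ T.powerset,
        (-1 : ℝ) ^ (U.card - r) * (U.card.choose r : ℝ) /
          (s + ∑ j ∈ U, p j) ^ 2 := by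
  have hqpos : ∀ U ∈ T.powerset, 0 < s + ∑ j ∈ U, p j := by
    intro U hU
    rw [Finset.mem_powerset] at hU
    have : 0 ≤ ∑ j ∈ U, p j := Finset.sum_nonneg fun j hj => (hp j (hU hj)).le
    linarith
  have key : ∀ U ∈ T.powerset,
      (-1 : ℝ) ^ (U.card - r) * (U.card.choose r : ℝ) / (s + ∑ j ∈ U, p j) ^ 2
        = ∫ t in Ioi (0:ℝ), ((-1 : ℝ) ^ (U.card - r) * (U.card.choose r : ℝ)) *
            (t * Real.exp (-((s + ∑ j ∈ U, p j) * t))) := by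
    intro U hU
    rw [MeasureTheory.integral_const_mul, psi_integral_val (hqpos U hU)]
    ring
  rw [Finset.sum_congr rfl key, ← MeasureTheory.integral_finset_sum _
    (fun U hU => (psi_integrable (hqpos U hU)).const_mul _)]
  set F : ℝ → ℝ := fun t => ∑ U ∈ T.powerset,
    ((-1 : ℝ) ^ (U.card - r) * (U.card.choose r : ℝ)) *
      (t * Real.exp (-((s + ∑ j ∈ U, p j) * t))) with hF
  have hFpos : ∀ t ∈ Ioi (0:ℝ), 0 < F t := by
    intro t ht
    rw [Set.mem_Ioi] at ht
    have hsplit : ∀ U ∈ T.powerset,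
        ((-1 : ℝ) ^ (U.card - r) * (U.card.choose r : ℝ)) *
            (t * Real.exp (-((s + ∑ j ∈ U, p j) * t)))
          = (t * Real.exp (-(s * t))) *
            ((-1 : ℝ) ^ (U.card - r) * (U.card.choose r : ℝ) *
              ∏ j ∈ U, Real.exp (-(p j * t))) := by
      intro U _
      rw [← Real.exp_sum]
      rw [show (-((s + ∑ j ∈ U, p j) * t)) = -(s * t) + ∑ j ∈ U, -(p j * t) by
        rw [add_mul, Finset.sum_mul, neg_add, ← Finset.sum_neg_distrib]]
      rw [Real.exp_add]
      ring
    rw [hF]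
    simp only []
    rw [Finset.sum_congr rfl hsplit, ← Finset.mul_sum,
      psi_comb T r (fun j => Real.exp (-(p j * t)))]
    have hte : 0 < t * Real.exp (-(s * t)) := mul_pos ht (Real.exp_pos _)
    refine mul_pos hte (Finset.sum_pos (fun V hV => ?_) ?_)
    · rw [Finset.mem_powersetCard] at hV
      refine mul_pos (Finset.prod_pos fun j _ => Real.exp_pos _)
        (Finset.prod_pos fun j hj => ?_)
      have hjT : j ∈ T := (Finset.sdiff_subset (s := T) (t := V)) hj
      have hpj : 0 < p j := hp j hjT
      have : Real.exp (-(p j * t)) < 1 := by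
        rw [Real.exp_lt_one_iff]
        nlinarith
      linarith
    · exact Finset.powersetCard_nonempty.mpr hr
  have hFint : IntegrableOn F (Ioi 0) :=
    integrable_finset_sum _ (fun U hU => (psi_integrable (hqpos U hU)).const_mul _)
  rw [setIntegral_pos_iff_support_of_nonneg_ae ?_ hFint]
  · have hsub : Ioi (0:ℝ) ⊆ Function.support F := fun t ht => (hFpos t ht).ne'
    rw [Set.inter_eq_self_of_subset_right hsub]
    rw [Real.volume_Ioi]
    exact ENNReal.zero_lt_top
  · refine (ae_restrict_iff' measurableSet_Ioi).2 (ae_of_all _ fun t ht => (hFpos t ht).le)
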